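/- Suppose each of n agents has a matroid rank valuation v_i on subsets of a finite set O of items, and let Φ : ℤ^n → ℝ be a symmetric strictly convex function. For an allocation A put Φ(A) = Φ(v_1(A_1),…,v_n(A_n)). Then an allocation A is leximin if and only if A is utilitarian optimal and Φ(A) ≤ Φ(B) for every utilitarian optimal allocation B. -/

import Mathlib

/-- An allocation: bundles are pairwise disjoint. -/
def IsAlloc {O : Type*} [DecidableEq O] {n : ℕ} (A : Fin n → Finset O) : Prop :=
  ∀ i j, i ≠ j → Disjoint (A i) (A j)

/-- Utilitarian social welfare. -/
def USW {O : Type*} {n : ℕ} (v : Fin n → Finset O → ℤ)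
    (A : Fin n → Finset O) : ℤ :=
  ∑ i, v i (A i)

/-- The vector of realized valuations, sorted in non-decreasing order. -/
def sVec {O : Type*} {n : ℕ} (v : Fin n → Finset O → ℤ)
    (A : Fin n → Finset O) : Fin n → ℤ :=
  (fun i => v i (A i)) ∘ Tuple.sort (fun i => v i (A i))



section Basics
variable {O : Type*} [DecidableEq O]

variable {f : Finset O → ℤ}

lemma mrv_between (hb : ∀ (S : Finset O) o, o ∉ S → f (insert o S) - f S = 0 ∨ f (insert o S) - f S = 1) :
    ∀ (m : ℕ) (T S : Finset O), T ⊆ S → (S \ T).card ≤ m →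
      f T ≤ f S ∧ f S ≤ f T + ((S \ T).card : ℤ) := by
  intro m
  induction m with
  | zero =>
    intro T S hTS hc
    have h0 : (S \ T) = ∅ := Finset.card_eq_zero.mp (Nat.le_zero.mp hc)
    have : S = T := Finset.Subset.antisymm (by
      intro x hx
      by_contra hxT
      have : x ∈ S \ T := Finset.mem_sdiff.mpr ⟨hx, hxT⟩
      simp [h0] at this) hTS
    subst this; simp
  | succ m ih =>
    intro T S hTS hc
    rcases Finset.eq_empty_or_nonempty (S \ T) with h0 | ⟨o, ho⟩
    · have : S = T := Finset.Subset.antisymm (by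
        intro x hx
        by_contra hxT
        have : x ∈ S \ T := Finset.mem_sdiff.mpr ⟨hx, hxT⟩
        simp [h0] at this) hTS
      subst this; simp
    · rcases Finset.mem_sdiff.mp ho with ⟨hoS, hoT⟩
      have hsub : insert o T ⊆ S := Finset.insert_subset hoS hTS
      have hdiff : S \ insert o T = (S \ T).erase o := by
        ext x; simp [Finset.mem_sdiff, Finset.mem_erase, Finset.mem_insert]; tauto
      have hcard : (S \ insert o T).card ≤ m := by
        rw [hdiff]
        have := Finset.card_erase_of_mem ho
        omega
      have IH := ih (insert o T) S hsub hcard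
      have hstep := hb T o hoT
      have hce : ((S \ T).card : ℤ) = (S \ insert o T).card + 1 := by
        rw [hdiff]
        have := Finset.card_erase_of_mem ho
        have : 0 < (S \ T).card := Finset.card_pos.mpr ⟨o, ho⟩
        push_cast
        rw [Finset.card_erase_of_mem ho]
        omega
      constructor <;> omega

lemma mrv_mono (hb : ∀ (S : Finset O) o, o ∉ S → f (insert o S) - f S = 0 ∨ f (insert o S) - f S = 1)
    {T S : Finset O} (h : T ⊆ S) : f T ≤ f S :=
  (mrv_between hb (S \ T).card T S h le_rfl).1

lemma mrv_diff_le (hb : ∀ (S : Finset O) o, o ∉ S → f (insert o S) - f S = 0 ∨ f (insert o S) - f S = 1)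
    {T S : Finset O} (h : T ⊆ S) : f S ≤ f T + ((S.card : ℤ) - T.card) := by
  have := (mrv_between hb (S \ T).card T S h le_rfl).2
  rwa [Finset.card_sdiff_of_subset h, Nat.cast_sub (Finset.card_le_card h)] at this

lemma mrv_le_card (hb : ∀ (S : Finset O) o, o ∉ S → f (insert o S) - f S = 0 ∨ f (insert o S) - f S = 1)
    (h0 : f ∅ = 0) (S : Finset O) : f S ≤ (S.card : ℤ) := by
  have := mrv_diff_le hb (Finset.empty_subset S)
  simpa [h0] using this

lemma mrv_nonneg (hb : ∀ (S : Finset O) o, o ∉ S → f (insert o S) - f S = 0 ∨ f (insert o S) - f S = 1)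
    (h0 : f ∅ = 0) (S : Finset O) : 0 ≤ f S := by
  have := mrv_mono hb (Finset.empty_subset S)
  omega

lemma mrv_indep_subset (hb : ∀ (S : Finset O) o, o ∉ S → f (insert o S) - f S = 0 ∨ f (insert o S) - f S = 1)
    (h0 : f ∅ = 0) {S T : Finset O} (hS : f S = S.card) (h : T ⊆ S) : f T = T.card := by
  have h1 := mrv_diff_le hb h
  have h2 := mrv_le_card hb h0 T
  have h3 : (T.card : ℤ) ≤ (S.card : ℤ) := Nat.cast_le.mpr (Finset.card_le_card h)
  omega

end Basics

section Basics
variable {O : Type*} [DecidableEq O] {f : Finset O → ℤ}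

lemma mrv_sub
    (hs : ∀ (S T : Finset O), S ⊆ T → ∀ o ∉ T, f (insert o T) - f T ≤ f (insert o S) - f S)
    (S : Finset O) :
    ∀ (K : Finset O), K ⊆ S → (∀ y ∈ K, f S - f (S.erase y) = 1) →
    f (S \ K) + (K.card : ℤ) ≤ f S := by
  intro K
  induction K using Finset.induction_on with
  | empty => simp
  | insert _ _ hy =>
    rename_i y K IH
    intro hins hmarg
    have hyS : y ∈ S := hins (Finset.mem_insert_self y K)
    have hKS : K ⊆ S := (Finset.insert_subset_iff.mp hins).2
    have hIH := IH hKS (fun z hz => hmarg z (Finset.mem_insert_of_mem hz))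
    have hySK : y ∈ S \ K := Finset.mem_sdiff.mpr ⟨hyS, hy⟩
    have hsubset : (S \ K).erase y ⊆ S.erase y := by
      intro x hx
      rcases Finset.mem_erase.mp hx with ⟨hxy, hx2⟩
      exact Finset.mem_erase.mpr ⟨hxy, (Finset.mem_sdiff.mp hx2).1⟩
    have hnotin : y ∉ S.erase y := Finset.notMem_erase y S
    have hkey := hs ((S \ K).erase y) (S.erase y) hsubset y hnotin
    rw [Finset.insert_erase hyS, Finset.insert_erase hySK] at hkey
    have h1 := hmarg y (Finset.mem_insert_self y K)
    have hset : S \ insert y K = (S \ K).erase y := by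
      ext x
      simp only [Finset.mem_sdiff, Finset.mem_erase, Finset.mem_insert]
      tauto
    rw [hset, Finset.card_insert_of_notMem hy]
    push_cast
    omega

lemma mrv_clean
    (hb : ∀ (S : Finset O) o, o ∉ S → f (insert o S) - f S = 0 ∨ f (insert o S) - f S = 1)
    (hs : ∀ (S T : Finset O), S ⊆ T → ∀ o ∉ T, f (insert o T) - f T ≤ f (insert o S) - f S)
    (h0 : f ∅ = 0) :
    ∀ (m : ℕ) (S : Finset O), S.card ≤ m → ∃ T, T ⊆ S ∧ f T = (T.card : ℤ) ∧ f T = f S := by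
  intro m
  induction m with
  | zero =>
    intro S hc
    have : S = ∅ := Finset.card_eq_zero.mp (Nat.le_zero.mp hc)
    exact ⟨∅, by simp [this, h0]⟩
  | succ m ih =>
    intro S hc
    by_cases hind : f S = (S.card : ℤ)
    · exact ⟨S, le_rfl, hind, rfl⟩
    · have hlt : f S < (S.card : ℤ) := lt_of_le_of_ne (mrv_le_card hb h0 S) hind
      have : ∃ y ∈ S, f (S.erase y) = f S := by
        by_contra hcon
        push_neg at hcon
        have hall : ∀ y ∈ S, f S - f (S.erase y) = 1 := by
          intro y hy
          have hstep := hb (S.erase y) y (Finset.notMem_erase y S)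
          rw [Finset.insert_erase hy] at hstep
          rcases hstep with h | h
          · exact absurd (by omega) (hcon y hy)
          · omega
        have := mrv_sub hs S S le_rfl hall
        simp [h0] at this
        omega
      rcases this with ⟨y, hyS, hval⟩
      have hcard : (S.erase y).card ≤ m := by
        have := Finset.card_erase_of_mem hyS
        have : 0 < S.card := Finset.card_pos.mpr ⟨y, hyS⟩
        omega
      rcases ih (S.erase y) hcard with ⟨T, hT1, hT2, hT3⟩
      exact ⟨T, hT1.trans (Finset.erase_subset y S), hT2, by omega⟩

lemma mrv_grow
    (hb : ∀ (S : Finset O) o, o ∉ S → f (insert o S) - f S = 0 ∨ f (insert o S) - f S = 1)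
    (hs : ∀ (S T : Finset O), S ⊆ T → ∀ o ∉ T, f (insert o T) - f T ≤ f (insert o S) - f S)
    (I J : Finset O) (hm : ∀ y ∈ J \ I, f (insert y I) = f I) :
    ∀ K, K ⊆ J \ I → f (I ∪ K) = f I := by
  intro K
  induction K using Finset.induction_on with
  | empty => simp
  | insert _ _ hy =>
    rename_i y K IH
    intro hins
    have hyJI : y ∈ J \ I := hins (Finset.mem_insert_self y K)
    have hKJI : K ⊆ J \ I := (Finset.insert_subset_iff.mp hins).2
    have hIH := IH hKJI
    have hyI : y ∉ I := (Finset.mem_sdiff.mp hyJI).2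
    by_cases hyK : y ∈ I ∪ K
    · have : y ∈ K := by
        rcases Finset.mem_union.mp hyK with h | h
        · exact absurd h hyI
        · exact h
      exact absurd this hy
    · have hkey := hs I (I ∪ K) Finset.subset_union_left y hyK
      have h1 := hm y hyJI
      have h2 := hb (I ∪ K) y hyK
      have : f (insert y (I ∪ K)) = f (I ∪ K) := by omega
      rw [Finset.union_insert]
      omega

lemma mrv_exch
    (hb : ∀ (S : Finset O) o, o ∉ S → f (insert o S) - f S = 0 ∨ f (insert o S) - f S = 1)
    (hs : ∀ (S T : Finset O), S ⊆ T → ∀ o ∉ T, f (insert o T) - f T ≤ f (insert o S) - f S)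
    (h0 : f ∅ = 0) {I J : Finset O} (hI : f I = (I.card : ℤ)) (hJ : f J = (J.card : ℤ))
    (hcard : I.card < J.card) : ∃ y ∈ J \ I, f (insert y I) = (I.card : ℤ) + 1 := by
  by_contra hcon
  push_neg at hcon
  have hall : ∀ y ∈ J \ I, f (insert y I) = f I := by
    intro y hy
    have hyI : y ∉ I := (Finset.mem_sdiff.mp hy).2
    have hstep := hb I y hyI
    rcases hstep with h | h
    · omega
    · exact absurd (by omega) (hcon y hy)
  have hgrow := mrv_grow hb hs I J hall (J \ I) le_rfl
  have hmono : f J ≤ f (I ∪ (J \ I)) := mrv_mono hb (by intro x hx; simp [Finset.mem_union, Finset.mem_sdiff]; tauto)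
  have : (J.card : ℤ) ≤ (I.card : ℤ) := by omega
  have : (I.card : ℤ) < (J.card : ℤ) := by exact_mod_cast hcard
  omega
end Basics


section Sorting
variable {n : ℕ}

/-- `u` composed with its sorting permutation. -/
def ssort (u : Fin n → ℤ) : Fin n → ℤ := u ∘ Tuple.sort u

/-- number of entries `≤ c`. -/
def cnt (u : Fin n → ℤ) (c : ℤ) : ℕ := (Finset.univ.filter (fun k => u k ≤ c)).card

lemma cnt_perm (u : Fin n → ℤ) (π : Equiv.Perm (Fin n)) (c : ℤ) :
    cnt (u ∘ π) c = cnt u c := by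
  unfold cnt
  rw [← Finset.card_map π.toEmbedding]
  congr 1
  ext x
  simp only [Finset.mem_map, Finset.mem_filter, Finset.mem_univ, true_and,
    Equiv.coe_toEmbedding, Function.comp_apply]
  constructor
  · rintro ⟨k, hk, rfl⟩; exact hk
  · intro hx; exact ⟨π.symm x, by simpa using hx, by simp⟩

lemma cnt_ssort (u : Fin n → ℤ) (c : ℤ) : cnt (ssort u) c = cnt u c :=
  cnt_perm u (Tuple.sort u) c

lemma monotone_ssort (u : Fin n → ℤ) : Monotone (ssort u) := Tuple.monotone_sort u

lemma cnt_index {s : Fin n → ℤ} (hm : Monotone s) (m : Fin n) (c : ℤ) :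
    s m ≤ c ↔ (m : ℕ) < cnt s c := by
  constructor
  · intro h
    have hsub : Finset.Iic m ⊆ Finset.univ.filter (fun k => s k ≤ c) := by
      intro k hk
      simp only [Finset.mem_filter, Finset.mem_univ, true_and]
      exact le_trans (hm (Finset.mem_Iic.mp hk)) h
    have := Finset.card_le_card hsub
    rw [Fin.card_Iic] at this
    unfold cnt
    omega
  · intro h
    by_contra hc
    push_neg at hc
    have hsub : Finset.univ.filter (fun k => s k ≤ c) ⊆ Finset.Iio m := by
      intro k hk
      simp only [Finset.mem_filter, Finset.mem_univ, true_and] at hk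
      rw [Finset.mem_Iio]
      by_contra hkm
      push_neg at hkm
      exact absurd (le_trans (hm hkm) hk) (not_le.mpr hc)
    have := Finset.card_le_card hsub
    rw [Fin.card_Iio] at this
    unfold cnt at h
    omega

lemma lex_lt_of_cnt {s s' : Fin n → ℤ} (hm : Monotone s) (hm' : Monotone s') (c : ℤ)
    (hc : cnt s' c < cnt s c) (hd : ∀ d, d < c → cnt s d = cnt s' d) :
    toLex s < toLex s' := by
  have hjn : cnt s' c < n := by
    have : cnt s c ≤ n := by
      unfold cnt
      calc (Finset.univ.filter (fun k => s k ≤ c)).card ≤ Finset.univ.card := Finset.card_le_card (Finset.filter_subset _ _)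
      _ = n := by simp
    omega
  set J : Fin n := ⟨cnt s' c, hjn⟩ with hJ
  have hsJ : s J ≤ c := (cnt_index hm J c).mpr (by simp [hJ]; omega)
  have hs'J : c < s' J := by
    by_contra h
    push_neg at h
    have := (cnt_index hm' J c).mp h
    simp [hJ] at this
  refine ⟨J, ?_, lt_of_le_of_lt hsJ hs'J⟩
  intro l hl
  have hlJ : (l : ℕ) < cnt s' c := hl
  have hs'l : s' l ≤ c := by
    rw [cnt_index hm']
    omega
  have hsl : s l ≤ c := le_trans (hm (le_of_lt hl)) hsJ
  by_contra hne
  rcases lt_or_gt_of_ne hne with hlt | hgt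
  · -- s l < s' l
    set d := s l with hdd
    have hdc : d < c := lt_of_lt_of_le hlt hs'l
    have h1 : (l : ℕ) < cnt s d := (cnt_index hm l d).mp le_rfl
    have h2 : ¬ ((l : ℕ) < cnt s' d) := by
      rw [← cnt_index hm']
      exact not_le.mpr hlt
    rw [hd d hdc] at h1
    omega
  · -- s' l < s l
    set d := s' l with hdd
    have hdc : d < c := lt_of_lt_of_le hgt hsl
    have h1 : (l : ℕ) < cnt s' d := (cnt_index hm' l d).mp le_rfl
    have h2 : ¬ ((l : ℕ) < cnt s d) := by
      rw [← cnt_index hm]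
      exact not_le.mpr hgt
    rw [hd d hdc] at h2
    omega

lemma eq_of_cnt {s s' : Fin n → ℤ} (hm : Monotone s) (hm' : Monotone s')
    (h : ∀ c, cnt s c = cnt s' c) : s = s' := by
  funext m
  have h1 : s m ≤ s' m := by
    rw [cnt_index hm, h]
    exact (cnt_index hm' m (s' m)).mp le_rfl
  have h2 : s' m ≤ s m := by
    rw [cnt_index hm', ← h]
    exact (cnt_index hm m (s m)).mp le_rfl
  omega

lemma filter_split (s : Finset (Fin n)) (p : Fin n → Prop) [DecidablePred p] (i : Fin n)
    (hi : i ∈ s) :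
    (s.filter p).card = ((s.erase i).filter p).card + if p i then 1 else 0 := by
  conv_lhs => rw [← Finset.insert_erase hi]
  rw [Finset.filter_insert]
  by_cases h : p i
  · simp only [if_pos h]
    rw [Finset.card_insert_of_notMem (by simp [Finset.mem_filter])]
  · simp [if_neg h]

end Sorting

section Sorting2
variable {n : ℕ}

lemma filter_congr_agree {u u' : Fin n → ℤ} (t : Finset (Fin n)) (c : ℤ)
    (h : ∀ k ∈ t, u' k = u k) :
    (t.filter (fun k => u' k ≤ c)).card = (t.filter (fun k => u k ≤ c)).card := by
  congr 1
  apply Finset.filter_congr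
  intro k hk
  rw [h k hk]

lemma sorted_lt_add {u u' : Fin n → ℤ} (i : Fin n) (hi : u' i = u i + 1)
    (h : ∀ k, k ≠ i → u' k = u k) : toLex (ssort u) < toLex (ssort u') := by
  apply lex_lt_of_cnt (monotone_ssort u) (monotone_ssort u') (u i)
  · rw [cnt_ssort, cnt_ssort]
    unfold cnt
    rw [filter_split Finset.univ (fun k => u' k ≤ u i) i (Finset.mem_univ i),
      filter_split Finset.univ (fun k => u k ≤ u i) i (Finset.mem_univ i),
      filter_congr_agree _ _ (fun k hk => h k (Finset.ne_of_mem_erase hk))]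
    rw [if_pos le_rfl, if_neg (by omega)]
    omega
  · intro d hd
    rw [cnt_ssort, cnt_ssort]
    unfold cnt
    rw [filter_split Finset.univ (fun k => u' k ≤ d) i (Finset.mem_univ i),
      filter_split Finset.univ (fun k => u k ≤ d) i (Finset.mem_univ i),
      filter_congr_agree _ _ (fun k hk => h k (Finset.ne_of_mem_erase hk))]
    rw [if_neg (by omega), if_neg (by omega)]

lemma sorted_lt_exch {u u' : Fin n → ℤ} (i j : Fin n) (hij : i ≠ j)
    (hi : u' i = u i + 1) (hj : u' j = u j - 1)
    (h : ∀ k, k ≠ i → k ≠ j → u' k = u k) (hlt : u i + 1 < u j) :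
    toLex (ssort u) < toLex (ssort u') := by
  have hjmem : j ∈ Finset.univ.erase i := Finset.mem_erase.mpr ⟨hij.symm, Finset.mem_univ j⟩
  have key : ∀ c : ℤ, c ≤ u i →
      cnt u' c + (if u i ≤ c then 1 else 0) + (if u j ≤ c then 1 else 0)
        = cnt u c + (if u' i ≤ c then 1 else 0) + (if u' j ≤ c then 1 else 0) := by
    intro c _
    unfold cnt
    rw [filter_split Finset.univ (fun k => u' k ≤ c) i (Finset.mem_univ i),
      filter_split (Finset.univ.erase i) (fun k => u' k ≤ c) j hjmem,
      filter_split Finset.univ (fun k => u k ≤ c) i (Finset.mem_univ i),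
      filter_split (Finset.univ.erase i) (fun k => u k ≤ c) j hjmem,
      filter_congr_agree ((Finset.univ.erase i).erase j) c
        (fun k hk => h k (Finset.ne_of_mem_erase (Finset.mem_of_mem_erase hk))
          (Finset.ne_of_mem_erase hk))]
    omega
  apply lex_lt_of_cnt (monotone_ssort u) (monotone_ssort u') (u i)
  · rw [cnt_ssort, cnt_ssort]
    have := key (u i) le_rfl
    rw [if_pos le_rfl, if_neg (by omega), if_neg (by omega), if_neg (by omega)] at this
    omega
  · intro d hd
    rw [cnt_ssort, cnt_ssort]
    have := key d (le_of_lt hd)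
    rw [if_neg (by omega), if_neg (by omega), if_neg (by omega), if_neg (by omega)] at this
    omega

lemma eq_comp_swap {u u' : Fin n → ℤ} (i j : Fin n)
    (hi : u' i = u j) (hj : u' j = u i) (h : ∀ k, k ≠ i → k ≠ j → u' k = u k) :
    u' = u ∘ (Equiv.swap i j) := by
  funext k
  by_cases hki : k = i
  · subst hki; simp [Equiv.swap_apply_left, hi]
  · by_cases hkj : k = j
    · subst hkj; simp [Equiv.swap_apply_right, hj]
    · simp [Equiv.swap_apply_of_ne_of_ne hki hkj, h k hki hkj]

lemma ssort_comp_perm (u : Fin n → ℤ) (π : Equiv.Perm (Fin n)) :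
    ssort (u ∘ π) = ssort u :=
  Tuple.comp_perm_comp_sort_eq_comp_sort

section Phi
variable (Φ : (Fin n → ℤ) → ℝ)
    (hsymm : ∀ (π : Equiv.Perm (Fin n)) (x : Fin n → ℤ), Φ (x ∘ π) = Φ x)

include hsymm

lemma phi_ssort (u : Fin n → ℤ) : Φ (ssort u) = Φ u := hsymm (Tuple.sort u) u

lemma phi_swap_eq {u u' : Fin n → ℤ} (i j : Fin n) (hij : i ≠ j)
    (hi : u' i = u i + 1) (hj : u' j = u j - 1)
    (h : ∀ k, k ≠ i → k ≠ j → u' k = u k) (heq : u j = u i + 1) :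
    Φ u' = Φ u ∧ ssort u' = ssort u := by
  have hu : u' = u ∘ (Equiv.swap i j) :=
    eq_comp_swap i j (by omega) (by omega) h
  rw [hu]
  exact ⟨hsymm _ u, ssort_comp_perm u _⟩

lemma phi_exch_lt
    (hconv : ∀ x y : Fin n → ℤ, x ≠ y → ∀ l : ℝ, 0 < l → l < 1 →
      ∀ z : Fin n → ℤ, (∀ k, (z k : ℝ) = l * (x k : ℝ) + (1 - l) * (y k : ℝ)) →
      Φ z < l * Φ x + (1 - l) * Φ y)
    {u u' : Fin n → ℤ} (i j : Fin n) (hij : i ≠ j)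
    (hi : u' i = u i + 1) (hj : u' j = u j - 1)
    (h : ∀ k, k ≠ i → k ≠ j → u' k = u k) (hlt : u i + 2 ≤ u j) :
    Φ u' < Φ u := by
  set y : Fin n → ℤ := u ∘ (Equiv.swap i j) with hy
  have hyi : y i = u j := by simp [hy, Equiv.swap_apply_left]
  have hyj : y j = u i := by simp [hy, Equiv.swap_apply_right]
  have hyk : ∀ k, k ≠ i → k ≠ j → y k = u k := by
    intro k hki hkj
    simp [hy, Equiv.swap_apply_of_ne_of_ne hki hkj]
  have hne : u ≠ y := by
    intro hcon
    have := congrFun hcon i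
    rw [hyi] at this
    omega
  set g : ℝ := (u j : ℝ) - (u i : ℝ) with hg
  have hg2 : (2 : ℝ) ≤ g := by
    rw [hg]
    have : (u i : ℝ) + 2 ≤ (u j : ℝ) := by exact_mod_cast hlt
    linarith
  have hgpos : (0:ℝ) < g := by linarith
  set l : ℝ := 1 - 1/g with hl
  have hl0 : 0 < l := by
    rw [hl]
    have : 1/g < 1 := by
      rw [div_lt_one hgpos]; linarith
    linarith
  have hl1 : l < 1 := by
    rw [hl]
    have : 0 < 1/g := by positivity
    linarith
  have hz : ∀ k, (u' k : ℝ) = l * (u k : ℝ) + (1 - l) * (y k : ℝ) := by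
    intro k
    by_cases hki : k = i
    · subst hki
      rw [hyi, hi, hl]
      push_cast
      field_simp
      ring
    · by_cases hkj : k = j
      · subst hkj
        rw [hyj, hj, hl]
        push_cast
        field_simp
        ring
      · rw [hyk k hki hkj, h k hki hkj]
        ring
  have := hconv u y hne l hl0 hl1 u' hz
  have hphiy : Φ y = Φ u := hsymm _ u
  rw [hphiy] at this
  linarith

end Phi
end Sorting2



section Core
variable {O : Type*} [DecidableEq O] [Fintype O] {n : ℕ}
variable {v : Fin n → Finset O → ℤ}

lemma alloc_clean
    (hbin : ∀ i (S : Finset O) (o : O), o ∉ S →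
      v i (insert o S) - v i S = 0 ∨ v i (insert o S) - v i S = 1)
    (hsub : ∀ i (S T : Finset O), S ⊆ T → ∀ o ∉ T,
      v i (insert o T) - v i T ≤ v i (insert o S) - v i S)
    (h0 : ∀ i, v i ∅ = 0)
    {A : Fin n → Finset O} (hA : IsAlloc A) :
    ∃ A', IsAlloc A' ∧ (∀ k, v k (A' k) = ((A' k).card : ℤ)) ∧
      (∀ k, v k (A' k) = v k (A k)) := by
  have hex : ∀ k, ∃ T, T ⊆ A k ∧ v k T = (T.card : ℤ) ∧ v k T = v k (A k) :=
    fun k => mrv_clean (hbin k) (hsub k) (h0 k) (A k).card (A k) le_rfl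
  choose A' hsub' hcl hval using hex
  exact ⟨A', fun i j hij => Finset.disjoint_of_subset_left (hsub' i)
    (Finset.disjoint_of_subset_right (hsub' j) (hA i j hij)), hcl, hval⟩

lemma move_isAlloc {A : Fin n → Finset O} (hA : IsAlloc A) (i j : Fin n) (hij : j ≠ i)
    (y : O) (hyAj : y ∈ A j) (hyAi : y ∉ A i) :
    IsAlloc (fun k => if k = i then insert y (A i) else if k = j then (A j).erase y else A k) := by
  intro k l hkl
  dsimp only
  rcases eq_or_ne k i with rfl | hk1
  · rw [if_pos rfl, if_neg (fun h : l = k => hkl h.symm)]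
    rcases eq_or_ne l j with rfl | hl2
    · rw [if_pos rfl, Finset.disjoint_insert_left]
      exact ⟨Finset.notMem_erase y (A l),
        Finset.disjoint_of_subset_right (Finset.erase_subset y (A l)) (hA _ _ hkl)⟩
    · rw [if_neg hl2, Finset.disjoint_insert_left]
      exact ⟨fun hyl => (Finset.disjoint_left.mp (hA j l (fun h => hl2 h.symm))) hyAj hyl,
        hA _ _ hkl⟩
  · rw [if_neg hk1]
    rcases eq_or_ne k j with rfl | hk2
    · rw [if_pos rfl]
      rcases eq_or_ne l i with rfl | hl1
      · rw [if_pos rfl, Finset.disjoint_insert_right]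
        exact ⟨Finset.notMem_erase y (A k),
          Finset.disjoint_of_subset_left (Finset.erase_subset y (A k)) (hA _ _ hkl)⟩
      · rw [if_neg hl1, if_neg (fun h : l = k => hkl h.symm)]
        exact Finset.disjoint_of_subset_left (Finset.erase_subset y (A k)) (hA _ _ hkl)
    · rw [if_neg hk2]
      rcases eq_or_ne l i with rfl | hl1
      · rw [if_pos rfl, Finset.disjoint_insert_right]
        exact ⟨fun hyk => (Finset.disjoint_left.mp (hA k j hk2)) hyk hyAj, hA _ _ hkl⟩
      · rw [if_neg hl1]
        rcases eq_or_ne l j with rfl | hl2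
        · rw [if_pos rfl]
          exact Finset.disjoint_of_subset_right (Finset.erase_subset y (A l)) (hA _ _ hkl)
        · rw [if_neg hl2]
          exact hA _ _ hkl

end Core


section CoreTwo
variable {O : Type*} [DecidableEq O] [Fintype O] {n : ℕ}
variable {v : Fin n → Finset O → ℤ}

/-- measure: total symmetric difference between two bundle systems -/
def mea (A B : Fin n → Finset O) : ℕ := ∑ k, ((A k \ B k).card + (B k \ A k).card)

lemma P2core
    (hbin : ∀ i (S : Finset O) (o : O), o ∉ S →
      v i (insert o S) - v i S = 0 ∨ v i (insert o S) - v i S = 1)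
    (hsub : ∀ i (S T : Finset O), S ⊆ T → ∀ o ∉ T,
      v i (insert o T) - v i T ≤ v i (insert o S) - v i S)
    (h0 : ∀ i, v i ∅ = 0)
    (B : Fin n → Finset O) (hB : IsAlloc B) (hBc : ∀ k, v k (B k) = ((B k).card : ℤ)) :
    ∀ (m : ℕ) (A : Fin n → Finset O), IsAlloc A → (∀ k, v k (A k) = ((A k).card : ℤ)) →
    ∀ i : Fin n, (A i).card < (B i).card → mea A B ≤ m →
    (∃ A', IsAlloc A' ∧ (∀ k, v k (A' k) = ((A' k).card : ℤ)) ∧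
        (A' i).card = (A i).card + 1 ∧ ∀ k, k ≠ i → (A' k).card = (A k).card) ∨
    (∃ j, (B j).card < (A j).card ∧ ∃ A', IsAlloc A' ∧
        (∀ k, v k (A' k) = ((A' k).card : ℤ)) ∧
        (A' i).card = (A i).card + 1 ∧ (A' j).card + 1 = (A j).card ∧
        ∀ k, k ≠ i → k ≠ j → (A' k).card = (A k).card) := by
  intro m
  induction m using Nat.strong_induction_on with
  | _ m IH =>
  intro A hA hAc i hi hm
  -- find an element of B i that can be added to A i
  obtain ⟨y, hyBI, hval⟩ := mrv_exch (hbin i) (hsub i) (h0 i) (hAc i) (hBc i) hi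
  rw [Finset.mem_sdiff] at hyBI
  obtain ⟨hyBi, hyAi⟩ := hyBI
  by_cases hfree : ∃ j, y ∈ A j
  · obtain ⟨j, hyAj⟩ := hfree
    have hji : j ≠ i := fun h => hyAi (h ▸ hyAj)
    set Anew := fun k => if k = i then insert y (A i) else if k = j then (A j).erase y else A k
      with hAnew
    have hAnewAlloc : IsAlloc Anew := move_isAlloc hA i j hji y hyAj hyAi
    have hAnewi : Anew i = insert y (A i) := by simp [hAnew]
    have hAnewj : Anew j = (A j).erase y := by simp [hAnew, hji]
    have hAnewk : ∀ k, k ≠ i → k ≠ j → Anew k = A k := by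
      intro k hki hkj; simp [hAnew, hki, hkj]
    have hcardi : (Anew i).card = (A i).card + 1 := by
      rw [hAnewi, Finset.card_insert_of_notMem hyAi]
    have hcardj : (Anew j).card + 1 = (A j).card := by
      rw [hAnewj, Finset.card_erase_of_mem hyAj]
      have : 0 < (A j).card := Finset.card_pos.mpr ⟨y, hyAj⟩
      omega
    have hAnewc : ∀ k, v k (Anew k) = ((Anew k).card : ℤ) := by
      intro k
      rcases eq_or_ne k i with rfl | hki
      · rw [hAnewi, Finset.card_insert_of_notMem hyAi]
        rw [hval]
        push_cast
        ring
      · rcases eq_or_ne k j with rfl | hkj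
        · rw [hAnewj]
          exact mrv_indep_subset (hbin k) (h0 k) (hAc k) (Finset.erase_subset y (A k))
        · rw [hAnewk k hki hkj]
          exact hAc k
    by_cases hc : (B j).card < (A j).card
    · -- done: second disjunct directly
      right
      exact ⟨j, hc, Anew, hAnewAlloc, hAnewc, hcardi, hcardj, fun k hki hkj => by
        rw [hAnewk k hki hkj]⟩
    · -- recurse on agent j
      push_neg at hc
      have hyBj : y ∉ B j := Finset.disjoint_left.mp (hB i j (fun h => hji h.symm)) hyBi
      -- measure decreases by 2
      have hterm_i : (Anew i \ B i).card + (B i \ Anew i).card + 1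
          = (A i \ B i).card + (B i \ A i).card := by
        have h1 : Anew i \ B i = A i \ B i := by
          rw [hAnewi]; ext x
          simp only [Finset.mem_sdiff, Finset.mem_insert]
          constructor
          · rintro ⟨hx1 | hx1, hx2⟩
            · exact absurd (hx1 ▸ hyBi) hx2
            · exact ⟨hx1, hx2⟩
          · tauto
        have h2 : B i \ Anew i = (B i \ A i).erase y := by
          rw [hAnewi]; ext x
          simp only [Finset.mem_sdiff, Finset.mem_insert, Finset.mem_erase]
          tauto
        rw [h1, h2, Finset.card_erase_of_mem (Finset.mem_sdiff.mpr ⟨hyBi, hyAi⟩)]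
        have : 0 < (B i \ A i).card :=
          Finset.card_pos.mpr ⟨y, Finset.mem_sdiff.mpr ⟨hyBi, hyAi⟩⟩
        omega
      have hterm_j : (Anew j \ B j).card + (B j \ Anew j).card + 1
          = (A j \ B j).card + (B j \ A j).card := by
        have h1 : Anew j \ B j = (A j \ B j).erase y := by
          rw [hAnewj]; ext x
          simp only [Finset.mem_sdiff, Finset.mem_erase]
          tauto
        have h2 : B j \ Anew j = B j \ A j := by
          rw [hAnewj]; ext x
          simp only [Finset.mem_sdiff, Finset.mem_erase]
          constructor
          · rintro ⟨hx1, hx2⟩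
            refine ⟨hx1, fun hx3 => hx2 ⟨fun hxy => hyBj (hxy ▸ hx1), hx3⟩⟩
          · rintro ⟨hx1, hx2⟩
            exact ⟨hx1, fun h => hx2 h.2⟩
        rw [h1, h2, Finset.card_erase_of_mem (Finset.mem_sdiff.mpr ⟨hyAj, hyBj⟩)]
        have : 0 < (A j \ B j).card :=
          Finset.card_pos.mpr ⟨y, Finset.mem_sdiff.mpr ⟨hyAj, hyBj⟩⟩
        omega
      have hmea : mea Anew B + 2 = mea A B := by
        unfold mea
        have hji' : j ∈ (Finset.univ.erase i) := Finset.mem_erase.mpr ⟨hji, Finset.mem_univ j⟩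
        rw [← Finset.add_sum_erase _ _ (Finset.mem_univ i),
            ← Finset.add_sum_erase _ _ hji',
            ← Finset.add_sum_erase _ (fun k => (A k \ B k).card + (B k \ A k).card)
              (Finset.mem_univ i),
            ← Finset.add_sum_erase _ (fun k => (A k \ B k).card + (B k \ A k).card) hji']
        have hsame : ∀ k ∈ (Finset.univ.erase i).erase j,
            (Anew k \ B k).card + (B k \ Anew k).card
              = (A k \ B k).card + (B k \ A k).card := by
          intro k hk
          rw [hAnewk k (Finset.ne_of_mem_erase (Finset.mem_of_mem_erase hk))
            (Finset.ne_of_mem_erase hk)]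
        rw [Finset.sum_congr rfl hsame]
        omega
      have hinv : (Anew j).card < (B j).card := by omega
      have hmlt : mea Anew B < m := by omega
      have := IH (mea Anew B) hmlt Anew hAnewAlloc hAnewc j hinv le_rfl
      rcases this with ⟨A'', hal, hcl, hcj, hrest⟩ | ⟨j₂, hj₂, A'', hal, hcl, hcj, hcj₂, hrest⟩
      · -- overall: first disjunct
        left
        refine ⟨A'', hal, hcl, ?_, ?_⟩
        · rw [hrest i (fun h => hji h.symm), hcardi]
        · intro k hki
          rcases eq_or_ne k j with rfl | hkj
          · omega
          · rw [hrest k hkj, hAnewk k hki hkj]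
      · -- second disjunct with j₂
        have hj₂j : j₂ ≠ j := by
          intro h
          subst h
          omega
        have hj₂i : j₂ ≠ i := by
          intro h
          subst h
          rw [hcardi] at hj₂
          omega
        right
        refine ⟨j₂, by rw [← hAnewk j₂ hj₂i hj₂j]; exact hj₂, A'', hal, hcl, ?_, ?_, ?_⟩
        · rw [hrest i (fun h => hji h.symm) (Ne.symm hj₂i), hcardi]
        · rw [← hAnewk j₂ hj₂i hj₂j]
          exact hcj₂
        · intro k hki hkj₂
          rcases eq_or_ne k j with rfl | hkj
          · omega
          · rw [hrest k hkj hkj₂, hAnewk k hki hkj]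
  · -- y is free: just add it to A i
    push_neg at hfree
    left
    set Anew := Function.update A i (insert y (A i)) with hAnew
    have hAnewi : Anew i = insert y (A i) := by simp [hAnew]
    have hAnewk : ∀ k, k ≠ i → Anew k = A k := by
      intro k hki; simp [hAnew, hki]
    refine ⟨Anew, ?_, ?_, ?_, fun k hki => by rw [hAnewk k hki]⟩
    · intro k l hkl
      rcases eq_or_ne k i with rfl | hk1
      · rw [hAnewi, hAnewk l (fun h => hkl h.symm), Finset.disjoint_insert_left]
        exact ⟨hfree l, hA _ _ hkl⟩
      · rw [hAnewk k hk1]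
        rcases eq_or_ne l i with rfl | hl1
        · rw [hAnewi, Finset.disjoint_insert_right]
          exact ⟨hfree k, hA _ _ hkl⟩
        · rw [hAnewk l hl1]
          exact hA _ _ hkl
    · intro k
      rcases eq_or_ne k i with rfl | hki
      · rw [hAnewi, Finset.card_insert_of_notMem hyAi, hval]
        push_cast
        ring
      · rw [hAnewk k hki]
        exact hAc k
    · rw [hAnewi, Finset.card_insert_of_notMem hyAi]

end CoreTwo

section CoreThree
variable {O : Type*} [DecidableEq O] [Fintype O] {n : ℕ}
variable {v : Fin n → Finset O → ℤ}

lemma P2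
    (hbin : ∀ i (S : Finset O) (o : O), o ∉ S →
      v i (insert o S) - v i S = 0 ∨ v i (insert o S) - v i S = 1)
    (hsub : ∀ i (S T : Finset O), S ⊆ T → ∀ o ∉ T,
      v i (insert o T) - v i T ≤ v i (insert o S) - v i S)
    (h0 : ∀ i, v i ∅ = 0)
    {A B : Fin n → Finset O} (hA : IsAlloc A) (hB : IsAlloc B) (i : Fin n)
    (hi : v i (A i) < v i (B i)) :
    (∃ A', IsAlloc A' ∧ v i (A' i) = v i (A i) + 1 ∧
        ∀ k, k ≠ i → v k (A' k) = v k (A k)) ∨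
    (∃ j, v j (B j) < v j (A j) ∧ ∃ A', IsAlloc A' ∧ v i (A' i) = v i (A i) + 1 ∧
        v j (A' j) = v j (A j) - 1 ∧ ∀ k, k ≠ i → k ≠ j → v k (A' k) = v k (A k)) := by
  obtain ⟨A₀, hA₀, hA₀c, hA₀v⟩ := alloc_clean hbin hsub h0 hA
  obtain ⟨B₀, hB₀, hB₀c, hB₀v⟩ := alloc_clean hbin hsub h0 hB
  have hcomp : (A₀ i).card < (B₀ i).card := by
    have h1 := hA₀c i; have h2 := hB₀c i; have h3 := hA₀v i; have h4 := hB₀v i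
    have : ((A₀ i).card : ℤ) < ((B₀ i).card : ℤ) := by omega
    exact_mod_cast this
  rcases P2core hbin hsub h0 B₀ hB₀ hB₀c (mea A₀ B₀) A₀ hA₀ hA₀c i hcomp le_rfl with
    ⟨A', hal, hcl, hci, hrest⟩ | ⟨j, hj, A', hal, hcl, hci, hcj, hrest⟩
  · left
    refine ⟨A', hal, ?_, ?_⟩
    · have h1 := hcl i; have h2 := hA₀c i; have h3 := hA₀v i
      have : ((A' i).card : ℤ) = ((A₀ i).card : ℤ) + 1 := by exact_mod_cast hci
      omega
    · intro k hki
      have h1 := hcl k; have h2 := hA₀c k; have h3 := hA₀v k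
      have : ((A' k).card : ℤ) = ((A₀ k).card : ℤ) := by exact_mod_cast hrest k hki
      omega
  · right
    have hji : v j (B j) < v j (A j) := by
      have h1 := hB₀c j; have h2 := hB₀v j; have h3 := hA₀c j; have h4 := hA₀v j
      have : ((B₀ j).card : ℤ) < ((A₀ j).card : ℤ) := by exact_mod_cast hj
      omega
    refine ⟨j, hji, A', hal, ?_, ?_, ?_⟩
    · have h1 := hcl i; have h2 := hA₀c i; have h3 := hA₀v i
      have : ((A' i).card : ℤ) = ((A₀ i).card : ℤ) + 1 := by exact_mod_cast hci
      omega
    · have h1 := hcl j; have h2 := hA₀c j; have h3 := hA₀v j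
      have : ((A' j).card : ℤ) + 1 = ((A₀ j).card : ℤ) := by exact_mod_cast hcj
      omega
    · intro k hki hkj
      have h1 := hcl k; have h2 := hA₀c k; have h3 := hA₀v k
      have : ((A' k).card : ℤ) = ((A₀ k).card : ℤ) := by exact_mod_cast hrest k hki hkj
      omega
end CoreThree


section Upper
variable {n : ℕ}

lemma sum_one {g g' : Fin n → ℤ} (j : Fin n) (hj : g' j = g j + 1)
    (h : ∀ k, k ≠ j → g' k = g k) : ∑ k, g' k = (∑ k, g k) + 1 := by
  have hpt : ∀ k, g' k = g k + (if k = j then 1 else 0) := by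
    intro k
    rcases eq_or_ne k j with rfl | hk
    · simp [hj]
    · simp [hk, h k hk]
  calc ∑ k, g' k = ∑ k, (g k + if k = j then 1 else 0) :=
        Finset.sum_congr rfl (fun k _ => hpt k)
    _ = (∑ k, g k) + ∑ k, (if k = j then (1:ℤ) else 0) := Finset.sum_add_distrib
    _ = (∑ k, g k) + 1 := by
        rw [Finset.sum_ite_eq' Finset.univ j (fun _ => (1:ℤ))]
        simp

lemma sum_two {g g' : Fin n → ℤ} (i j : Fin n) (hij : i ≠ j) (hi : g' i = g i + 1)
    (hj : g' j = g j - 1) (h : ∀ k, k ≠ i → k ≠ j → g' k = g k) :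
    ∑ k, g' k = ∑ k, g k := by
  have hpt : ∀ k, g' k = g k + ((if k = i then 1 else 0) - (if k = j then 1 else 0)) := by
    intro k
    rcases eq_or_ne k i with rfl | hk1
    · simp [hi, if_neg hij]
    · rcases eq_or_ne k j with rfl | hk2
      · rw [hj, if_neg hk1, if_pos rfl]
        ring
      · simp [hk1, hk2, h k hk1 hk2]
  calc ∑ k, g' k = ∑ k, (g k + ((if k = i then 1 else 0) - (if k = j then 1 else 0))) :=
        Finset.sum_congr rfl (fun k _ => hpt k)
    _ = (∑ k, g k) + ∑ k, ((if k = i then (1:ℤ) else 0) - (if k = j then 1 else 0)) :=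
        Finset.sum_add_distrib
    _ = ∑ k, g k := by
        rw [Finset.sum_sub_distrib, Finset.sum_ite_eq' Finset.univ i (fun _ => (1:ℤ)),
          Finset.sum_ite_eq' Finset.univ j (fun _ => (1:ℤ))]
        simp

variable {O : Type*} [DecidableEq O] [Fintype O] {v : Fin n → Finset O → ℤ}

lemma exists_lt_index {A B : Fin n → Finset O} (h : USW v A < USW v B) :
    ∃ i, v i (A i) < v i (B i) := by
  by_contra hcon
  push_neg at hcon
  exact absurd (Finset.sum_le_sum (fun k _ => hcon k)) (not_le.mpr h)

lemma lex_opt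
    (hbin : ∀ i (S : Finset O) (o : O), o ∉ S →
      v i (insert o S) - v i S = 0 ∨ v i (insert o S) - v i S = 1)
    (hsub : ∀ i (S T : Finset O), S ⊆ T → ∀ o ∉ T,
      v i (insert o T) - v i T ≤ v i (insert o S) - v i S)
    (h0 : ∀ i, v i ∅ = 0)
    {A : Fin n → Finset O} (hA : IsAlloc A)
    (hlex : ∀ B, IsAlloc B → toLex (sVec v B) ≤ toLex (sVec v A)) :
    ∀ B, IsAlloc B → USW v B ≤ USW v A := by
  suffices h : ∀ (m : ℕ) (B : Fin n → Finset O), IsAlloc B →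
      (∑ k, (v k (A k) - v k (B k)).natAbs) ≤ m → USW v B ≤ USW v A by
    intro B hB
    exact h _ B hB le_rfl
  intro m
  induction m using Nat.strong_induction_on with
  | _ m IH =>
  intro B hB hd
  by_contra husw
  push_neg at husw
  by_cases hcase : ∃ j, v j (B j) < v j (A j)
  · obtain ⟨j, hj⟩ := hcase
    rcases P2 hbin hsub h0 hB hA j hj with
      ⟨B', hal, hcj, hrest⟩ | ⟨j', hj', B', hal, hcj, hcj', hrest⟩
    · -- B' has strictly larger USW, closer to A
      have husw' : USW v A < USW v B' := by
        have : USW v B' = USW v B + 1 := sum_one j hcj hrest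
        omega
      have hdist : (∑ k, (v k (A k) - v k (B' k)).natAbs)
          < ∑ k, (v k (A k) - v k (B k)).natAbs := by
        apply Finset.sum_lt_sum
        · intro k _
          rcases eq_or_ne k j with rfl | hk
          · rw [hcj]; omega
          · rw [hrest k hk]
        · exact ⟨j, Finset.mem_univ j, by rw [hcj]; omega⟩
      exact absurd (IH _ (by omega) B' hal le_rfl) (not_le.mpr husw')
    · have hjj' : j ≠ j' := by intro h; rw [h] at hj; omega
      have husw' : USW v A < USW v B' := by
        have : USW v B' = USW v B := sum_two j j' hjj' hcj hcj' hrest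
        omega
      have hdist : (∑ k, (v k (A k) - v k (B' k)).natAbs)
          < ∑ k, (v k (A k) - v k (B k)).natAbs := by
        apply Finset.sum_lt_sum
        · intro k _
          rcases eq_or_ne k j with rfl | hk
          · rw [hcj]; omega
          · rcases eq_or_ne k j' with rfl | hk'
            · rw [hcj']; omega
            · rw [hrest k hk hk']
        · exact ⟨j, Finset.mem_univ j, by rw [hcj]; omega⟩
      exact absurd (IH _ (by omega) B' hal le_rfl) (not_le.mpr husw')
  · push_neg at hcase
    obtain ⟨i, hi⟩ := exists_lt_index husw
    rcases P2 hbin hsub h0 hA hB i hi with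
      ⟨A', hal, hci, hrest⟩ | ⟨j, hj, _⟩
    · have : toLex (sVec v A) < toLex (sVec v A') := by
        exact sorted_lt_add (u := fun k => v k (A k)) (u' := fun k => v k (A' k)) i hci hrest
      exact absurd (hlex A' hal) (not_le_of_gt this)
    · exact absurd hj (not_lt.mpr (hcase j))

end Upper

section LemC
variable {n : ℕ} {O : Type*} [DecidableEq O] [Fintype O] {v : Fin n → Finset O → ℤ}

lemma lemC
    (hbin : ∀ i (S : Finset O) (o : O), o ∉ S →
      v i (insert o S) - v i S = 0 ∨ v i (insert o S) - v i S = 1)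
    (hsub : ∀ i (S T : Finset O), S ⊆ T → ∀ o ∉ T,
      v i (insert o T) - v i T ≤ v i (insert o S) - v i S)
    (h0 : ∀ i, v i ∅ = 0)
    (Φ : (Fin n → ℤ) → ℝ)
    (hsymm : ∀ (π : Equiv.Perm (Fin n)) (x : Fin n → ℤ), Φ (x ∘ π) = Φ x)
    (hconv : ∀ x y : Fin n → ℤ, x ≠ y → ∀ l : ℝ, 0 < l → l < 1 →
      ∀ z : Fin n → ℤ, (∀ k, (z k : ℝ) = l * (x k : ℝ) + (1 - l) * (y k : ℝ)) →
      Φ z < l * Φ x + (1 - l) * Φ y)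
    {L : Fin n → Finset O} (hL : IsAlloc L)
    (hlexL : ∀ B, IsAlloc B → toLex (sVec v B) ≤ toLex (sVec v L)) :
    ∀ (m : ℕ) (Y : Fin n → Finset O), IsAlloc Y →
      (∀ B, IsAlloc B → USW v B ≤ USW v Y) →
      (∀ B, IsAlloc B → (∀ C, IsAlloc C → USW v C ≤ USW v B) →
        Φ (fun k => v k (Y k)) ≤ Φ (fun k => v k (B k))) →
      (∑ k, (v k (L k) - v k (Y k)).natAbs) ≤ m →
      sVec v Y = sVec v L := by
  intro m
  induction m using Nat.strong_induction_on with
  | _ m IH =>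
  intro Y hY hYopt hYmin hdist
  by_cases heq : ∀ k, v k (Y k) = v k (L k)
  · show ssort (fun k => v k (Y k)) = ssort (fun k => v k (L k))
    rw [funext heq]
  · push_neg at heq
    obtain ⟨k₀, hk₀⟩ := heq
    have hUeq : USW v Y = USW v L :=
      le_antisymm (lex_opt hbin hsub h0 hL hlexL Y hY) (hYopt L hL)
    have hDne : ∃ k, v k (Y k) < v k (L k) := by
      by_contra hcon
      push_neg at hcon
      have : USW v L < USW v Y := by
        apply Finset.sum_lt_sum (fun k _ => hcon k)
        exact ⟨k₀, Finset.mem_univ k₀, lt_of_le_of_ne (hcon k₀) (Ne.symm hk₀)⟩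
      omega
    set D := Finset.univ.filter (fun k => v k (Y k) < v k (L k)) with hD
    have hDne' : D.Nonempty := by
      obtain ⟨k, hk⟩ := hDne
      exact ⟨k, Finset.mem_filter.mpr ⟨Finset.mem_univ k, hk⟩⟩
    obtain ⟨i, hiD, himin⟩ := Finset.exists_min_image D (fun k => v k (Y k)) hDne'
    have hi : v i (Y i) < v i (L i) := (Finset.mem_filter.mp hiD).2
    rcases P2 hbin hsub h0 hY hL i hi with
      ⟨Y', hal, hci, hrest⟩ | ⟨j, hj, Y', hal, hci, hcj, hrest⟩
    · -- sum would increase: contradiction with optimality of Y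
      have : USW v Y' = USW v Y + 1 := sum_one i hci hrest
      have := hYopt Y' hal
      omega
    · -- exchange on Y
      have hij : i ≠ j := fun h => by rw [h] at hi; omega
      have hUY' : USW v Y' = USW v Y := sum_two i j hij hci hcj hrest
      have hY'opt : ∀ B, IsAlloc B → USW v B ≤ USW v Y' := by
        intro B hB; rw [hUY']; exact hYopt B hB
      rcases lt_trichotomy (v j (Y j)) (v i (Y i) + 1) with hba | hba | hba
      · -- v j (Y j) ≤ v i (Y i) : use minimality of i and exchange on L
        rcases P2 hbin hsub h0 hL hY j hj with
          ⟨L', lal, lci, lrest⟩ | ⟨j', hj', L', lal, lci, lcj', lrest⟩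
        · have : toLex (sVec v L) < toLex (sVec v L') :=
            sorted_lt_add (u := fun k => v k (L k)) (u' := fun k => v k (L' k)) j lci lrest
          exact absurd (hlexL L' lal) (not_le_of_gt this)
        · have hjj' : j ≠ j' := fun h => by rw [h] at hj; omega
          by_cases hgap : v j (L j) + 1 < v j' (L j')
          · have : toLex (sVec v L) < toLex (sVec v L') :=
              sorted_lt_exch (u := fun k => v k (L k)) (u' := fun k => v k (L' k))
                j j' hjj' lci lcj' lrest hgap
            exact absurd (hlexL L' lal) (not_le_of_gt this)
          · push_neg at hgap
            have hj'D : j' ∈ D := Finset.mem_filter.mpr ⟨Finset.mem_univ j', hj'⟩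
            have := himin j' hj'D
            omega
      · -- adjacent values: swap keeps Φ and ssort, recurse
        obtain ⟨hphi, hss⟩ := phi_swap_eq Φ hsymm (u := fun k => v k (Y k))
          (u' := fun k => v k (Y' k)) i j hij hci hcj hrest
          (show v j (Y j) = v i (Y i) + 1 by omega)
        have hY'min : ∀ B, IsAlloc B → (∀ C, IsAlloc C → USW v C ≤ USW v B) →
            Φ (fun k => v k (Y' k)) ≤ Φ (fun k => v k (B k)) := by
          intro B hB hBopt
          rw [hphi]
          exact hYmin B hB hBopt
        have hdist' : (∑ k, (v k (L k) - v k (Y' k)).natAbs)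
            < ∑ k, (v k (L k) - v k (Y k)).natAbs := by
          apply Finset.sum_lt_sum
          · intro k _
            rcases eq_or_ne k i with rfl | hk1
            · rw [hci]; omega
            · rcases eq_or_ne k j with rfl | hk2
              · rw [hcj]; omega
              · rw [hrest k hk1 hk2]
          · exact ⟨i, Finset.mem_univ i, by rw [hci]; omega⟩
        have hres := IH _ (by omega) Y' hal hY'opt hY'min le_rfl
        calc sVec v Y = ssort (fun k => v k (Y k)) := rfl
          _ = ssort (fun k => v k (Y' k)) := hss.symm
          _ = sVec v L := hres
      · -- gap at least 2 : Φ strictly decreases, contradiction with Φ-minimality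
        have hlt := phi_exch_lt Φ hsymm hconv (u := fun k => v k (Y k))
          (u' := fun k => v k (Y' k)) i j hij hci hcj hrest
          (show v i (Y i) + 2 ≤ v j (Y j) by omega)
        have := hYmin Y' hal hY'opt
        have : Φ (fun k => v k (Y' k)) < Φ (fun k => v k (Y' k)) := lt_of_lt_of_le hlt this
        exact absurd this (lt_irrefl _)
end LemC

section Main
variable {n : ℕ} {O : Type*} [DecidableEq O] [Fintype O] {v : Fin n → Finset O → ℤ}

lemma empty_alloc : IsAlloc (fun _ : Fin n => (∅ : Finset O)) :=
  fun _ _ _ => Finset.disjoint_empty_left _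

lemma exists_leximin (v : Fin n → Finset O → ℤ) :
    ∃ L, IsAlloc L ∧ ∀ B, IsAlloc B → toLex (sVec v B) ≤ toLex (sVec v L) := by
  classical
  set F : Finset (Fin n → Finset O) := Finset.univ.filter IsAlloc with hF
  have hFne : F.Nonempty :=
    ⟨fun _ => ∅, Finset.mem_filter.mpr ⟨Finset.mem_univ _, empty_alloc⟩⟩
  set T : Finset (Lex (Fin n → ℤ)) := F.image (fun A => toLex (sVec v A)) with hT
  obtain ⟨x, hx, hmax⟩ := T.exists_maximal (hFne.image _)
  obtain ⟨L, hLF, hLx⟩ := Finset.mem_image.mp hx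
  refine ⟨L, (Finset.mem_filter.mp hLF).2, fun B hB => ?_⟩
  have hBT : toLex (sVec v B) ∈ T :=
    Finset.mem_image_of_mem _ (Finset.mem_filter.mpr ⟨Finset.mem_univ _, hB⟩)
  rw [hLx]
  have tri := (Pi.isTrichotomous_lex (r := ((· < ·) : Fin n → Fin n → Prop))
    (@fun _ => ((· < ·) : ℤ → ℤ → Prop)) (IsWellFounded.wf)).trichotomous
  rcases lt_trichotomy (toLex (sVec v B)) x with h1 | h1 | h1
  · exact le_of_lt h1
  · exact le_of_eq h1
  · exact absurd (hmax hBT (le_of_lt h1)) (not_le_of_gt h1)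

lemma exists_phimin (v : Fin n → Finset O → ℤ) (Φ : (Fin n → ℤ) → ℝ) :
    ∃ Y, IsAlloc Y ∧ (∀ B, IsAlloc B → USW v B ≤ USW v Y) ∧
      ∀ B, IsAlloc B → (∀ C, IsAlloc C → USW v C ≤ USW v B) →
        Φ (fun k => v k (Y k)) ≤ Φ (fun k => v k (B k)) := by
  classical
  set F : Finset (Fin n → Finset O) := Finset.univ.filter IsAlloc with hF
  have hFne : F.Nonempty :=
    ⟨fun _ => ∅, Finset.mem_filter.mpr ⟨Finset.mem_univ _, empty_alloc⟩⟩
  obtain ⟨Z, hZF, hZmax⟩ := Finset.exists_max_image F (USW v) hFne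
  set F' : Finset (Fin n → Finset O) :=
    F.filter (fun A => ∀ B, IsAlloc B → USW v B ≤ USW v A) with hF'
  have hF'ne : F'.Nonempty := by
    refine ⟨Z, Finset.mem_filter.mpr ⟨hZF, fun B hB => ?_⟩⟩
    exact hZmax B (Finset.mem_filter.mpr ⟨Finset.mem_univ _, hB⟩)
  obtain ⟨Y, hYF', hYmin⟩ :=
    Finset.exists_min_image F' (fun A => Φ (fun k => v k (A k))) hF'ne
  obtain ⟨hYF, hYopt⟩ := Finset.mem_filter.mp hYF'
  refine ⟨Y, (Finset.mem_filter.mp hYF).2, hYopt, fun B hB hBopt => ?_⟩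
  exact hYmin B (Finset.mem_filter.mpr ⟨Finset.mem_filter.mpr ⟨Finset.mem_univ _, hB⟩, hBopt⟩)

theorem main_thm
    (h0 : ∀ i, v i ∅ = 0)
    (hbin : ∀ i (S : Finset O) (o : O), o ∉ S →
      v i (insert o S) - v i S = 0 ∨ v i (insert o S) - v i S = 1)
    (hsub : ∀ i (S T : Finset O), S ⊆ T → ∀ o ∉ T,
      v i (insert o T) - v i T ≤ v i (insert o S) - v i S)
    (Φ : (Fin n → ℤ) → ℝ)
    (hsymm : ∀ (π : Equiv.Perm (Fin n)) (x : Fin n → ℤ), Φ (x ∘ π) = Φ x)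
    (hconv : ∀ x y : Fin n → ℤ, x ≠ y → ∀ l : ℝ, 0 < l → l < 1 →
      ∀ z : Fin n → ℤ, (∀ k, (z k : ℝ) = l * (x k : ℝ) + (1 - l) * (y k : ℝ)) →
      Φ z < l * Φ x + (1 - l) * Φ y)
    (A : Fin n → Finset O) :
    (IsAlloc A ∧ ∀ B : Fin n → Finset O, IsAlloc B →
        toLex (sVec v B) ≤ toLex (sVec v A)) ↔
    (IsAlloc A ∧ (∀ B : Fin n → Finset O, IsAlloc B → USW v B ≤ USW v A) ∧
      ∀ B : Fin n → Finset O, IsAlloc B →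
        (∀ C : Fin n → Finset O, IsAlloc C → USW v C ≤ USW v B) →
        Φ (fun i => v i (A i)) ≤ Φ (fun i => v i (B i))) := by
  constructor
  · rintro ⟨hA, hlex⟩
    have hopt := lex_opt hbin hsub h0 hA hlex
    refine ⟨hA, hopt, ?_⟩
    intro B hB hBopt
    obtain ⟨Y, hY, hYopt, hYmin⟩ := exists_phimin v Φ
    have hres := lemC hbin hsub h0 Φ hsymm hconv hA hlex _ Y hY hYopt hYmin le_rfl
    -- sVec v Y = sVec v A, so Φ of uA equals Φ of uY which is minimal
    have hssA : Φ (fun i => v i (A i)) = Φ (fun i => v i (Y i)) := by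
      have h1 : Φ (ssort (fun i => v i (A i))) = Φ (fun i => v i (A i)) :=
        phi_ssort Φ hsymm _
      have h2 : Φ (ssort (fun i => v i (Y i))) = Φ (fun i => v i (Y i)) :=
        phi_ssort Φ hsymm _
      have h3 : ssort (fun i => v i (Y i)) = ssort (fun i => v i (A i)) := hres
      rw [← h1, ← h2, h3]
    rw [hssA]
    exact hYmin B hB hBopt
  · rintro ⟨hA, hopt, hmin⟩
    obtain ⟨L, hL, hlexL⟩ := exists_leximin v
    have hres := lemC hbin hsub h0 Φ hsymm hconv hL hlexL _ A hA hopt hmin le_rfl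
    refine ⟨hA, fun B hB => ?_⟩
    have h1 := hlexL B hB
    have h2 : toLex (sVec v L) = toLex (sVec v A) := congrArg toLex hres.symm
    rw [h2] at h1
    exact h1
end Main

/-- For matroid rank valuations and any symmetric strictly
convex `Φ : ℤ^n → ℝ`, an allocation is leximin iff it minimizes `Φ` over all
utilitarian optimal allocations. -/
theorem leximin_iff_min_symmetric_strictly_convex
    {O : Type*} [DecidableEq O] [Fintype O] {n : ℕ}
    (v : Fin n → Finset O → ℤ)
    (h0 : ∀ i, v i ∅ = 0)
    (hbin : ∀ i (S : Finset O) (o : O), o ∉ S →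
      v i (insert o S) - v i S = 0 ∨ v i (insert o S) - v i S = 1)
    (hsub : ∀ i (S T : Finset O), S ⊆ T → ∀ o ∉ T,
      v i (insert o T) - v i T ≤ v i (insert o S) - v i S)
    (Φ : (Fin n → ℤ) → ℝ)
    (hsymm : ∀ (π : Equiv.Perm (Fin n)) (x : Fin n → ℤ), Φ (x ∘ π) = Φ x)
    (hconv : ∀ x y : Fin n → ℤ, x ≠ y → ∀ l : ℝ, 0 < l → l < 1 →
      ∀ z : Fin n → ℤ, (∀ k, (z k : ℝ) = l * (x k : ℝ) + (1 - l) * (y k : ℝ)) →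
      Φ z < l * Φ x + (1 - l) * Φ y)
    (A : Fin n → Finset O) :
    (IsAlloc A ∧ ∀ B : Fin n → Finset O, IsAlloc B →
        toLex (sVec v B) ≤ toLex (sVec v A)) ↔
    (IsAlloc A ∧ (∀ B : Fin n → Finset O, IsAlloc B → USW v B ≤ USW v A) ∧
      ∀ B : Fin n → Finset O, IsAlloc B →
        (∀ C : Fin n → Finset O, IsAlloc C → USW v C ≤ USW v B) →
        Φ (fun i => v i (A i)) ≤ Φ (fun i => v i (B i))) := by
  exact main_thm h0 hbin hsub Φ hsymm hconv A
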